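/- Let G = (V, E) be a finite simple graph, let x be a greedy packing of G, let U ⊆ V, and let y : V → ℝ≥0 satisfy y_v = x_v for all v ∈ V \ U and y_u ≥ x_u for all u ∈ U. If Σ_y(u) ≤ 1 for all u ∈ U, then y is also a greedy packing of G. -/

import Mathlib

open Finset
open Classical

/-- A greedy packing of a finite simple graph `G`: a nonnegative vertex vector `x` for
which there is a (strict) linear order `p` on the vertices such that for every vertex `v`,
`x v` plus the sum of `x u` over neighbors `u` of `v` preceding `v` is at most `1`. -/
def IsGreedyPacking {V : Type*} [Fintype V] (G : SimpleGraph V) [DecidableRel G.Adj]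
    (x : V → ℝ) : Prop :=
  (∀ v : V, 0 ≤ x v) ∧
  ∃ p : V → V → Prop, IsStrictTotalOrder V p ∧
    ∀ v : V, x v + ∑ u ∈ G.neighborFinset v, (if p u v then x u else 0) ≤ 1

/-- If `x` is a greedy packing, `U ⊆ V`, and `y` is a nonnegative
vector agreeing with `x` outside `U`, dominating `x` on `U`, and with `Σ_y(u) ≤ 1` for
all `u ∈ U`, then `y` is also a greedy packing. -/
theorem greedyPacking_raise_subset
    {V : Type*} [Fintype V] [DecidableEq V]
    (G : SimpleGraph V) [DecidableRel G.Adj]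
    (x : V → ℝ) (hx : IsGreedyPacking G x)
    (U : Finset V)
    (y : V → ℝ) (hy0 : ∀ u : V, 0 ≤ y u)
    (hyout : ∀ v : V, v ∉ U → y v = x v)
    (hyin : ∀ u ∈ U, x u ≤ y u)
    (hU : ∀ u ∈ U, y u + ∑ w ∈ G.neighborFinset u, y w ≤ 1) :
    IsGreedyPacking G y := by
  obtain ⟨hx0, p, hp, hps⟩ := hx
  refine ⟨hy0, fun u v => (u ∉ U ∧ v ∈ U) ∨ ((u ∈ U ↔ v ∈ U) ∧ p u v), ?_, ?_⟩
  · refine { trichotomous := ?_, irrefl := ?_, trans := ?_ }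
    · -- trichotomous
      intro a b
      suffices H : ((a ∉ U ∧ b ∈ U) ∨ ((a ∈ U ↔ b ∈ U) ∧ p a b)) ∨ a = b ∨ ((b ∉ U ∧ a ∈ U) ∨ ((b ∈ U ↔ a ∈ U) ∧ p b a)) by
        intro h1 h2
        rcases H with H | H | H
        exacts [absurd H h1, H, absurd H h2]
      rcases (if h1 : p a b then Or.inl h1 else if h2 : p b a then Or.inr (Or.inr h2) else Or.inr (Or.inl (hp.trichotomous a b h1 h2)) : p a b ∨ a = b ∨ p b a) with h | h | h
      · by_cases ha : a ∈ U <;> by_cases hb : b ∈ U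
        · exact Or.inl (Or.inr ⟨by tauto, h⟩)
        · exact Or.inr (Or.inr (Or.inl ⟨hb, ha⟩))
        · exact Or.inl (Or.inl ⟨ha, hb⟩)
        · exact Or.inl (Or.inr ⟨by tauto, h⟩)
      · exact Or.inr (Or.inl h)
      · by_cases ha : a ∈ U <;> by_cases hb : b ∈ U
        · exact Or.inr (Or.inr (Or.inr ⟨by tauto, h⟩))
        · exact Or.inr (Or.inr (Or.inl ⟨hb, ha⟩))
        · exact Or.inl (Or.inl ⟨ha, hb⟩)
        · exact Or.inr (Or.inr (Or.inr ⟨by tauto, h⟩))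
    · -- irrefl
      intro a h
      rcases h with ⟨h1, h2⟩ | ⟨_, h2⟩
      · exact h1 h2
      · exact hp.irrefl a h2
    · -- trans
      intro a b c hab hbc
      rcases hab with ⟨ha, hb⟩ | ⟨hab, pab⟩ <;> rcases hbc with ⟨hb', hc⟩ | ⟨hbc, pbc⟩
      · exact absurd hb hb'
      · exact Or.inl ⟨ha, hbc.mp hb⟩
      · exact Or.inl ⟨fun h => hb' (hab.mp h), hc⟩
      · exact Or.inr ⟨hab.trans hbc, hp.trans a b c pab pbc⟩
  · intro v
    by_cases hv : v ∈ U
    · refine le_trans ?_ (hU v hv)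
      refine add_le_add le_rfl (Finset.sum_le_sum fun u _ => ?_)
      split <;> simp [hy0 u]
    · refine le_trans ?_ (hps v)
      rw [hyout v hv]
      refine add_le_add le_rfl (Finset.sum_le_sum fun u _ => ?_)
      by_cases h : (u ∉ U ∧ v ∈ U) ∨ ((u ∈ U ↔ v ∈ U) ∧ p u v)
      · rcases h with ⟨_, hvU⟩ | ⟨hiff, puv⟩
        · exact absurd hvU hv
        · have hu : u ∉ U := fun h => hv (hiff.mp h)
          rw [if_pos (Or.inr ⟨hiff, puv⟩), if_pos puv, hyout u hu]
      · simp only [h, if_false]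
        split <;> simp [hx0 u]
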